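/- Missing information principle, third order (Lemma 7 of the paper, order 3, finite mixture form): if p is three times differentiable in θ, then for every θ ∈ U, (d³/dθ³) log P(θ) = E_θ[ℓ₃(θ,·)] + 3 E_θ^c[ℓ₂(θ,·) ℓ₁(θ,·)] + E_θ^c[ℓ₁(θ,·)³]. -/

import Mathlib

noncomputable section

/-- `P(θ) = Σ_x p(θ,x)`. -/
def mixP {𝒳 : Type*} [Fintype 𝒳] (p : ℝ → 𝒳 → ℝ) (θ : ℝ) : ℝ := ∑ x, p θ x

/-- Posterior weights `w(θ,x) = p(θ,x)/P(θ)`. -/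
def mixW {𝒳 : Type*} [Fintype 𝒳] (p : ℝ → 𝒳 → ℝ) (θ : ℝ) (x : 𝒳) : ℝ :=
  p θ x / mixP p θ

/-- Conditional expectation `E_θ[g] = Σ_x w(θ,x) g(x)`. -/
def mixE {𝒳 : Type*} [Fintype 𝒳] (p : ℝ → 𝒳 → ℝ) (θ : ℝ) (g : 𝒳 → ℝ) : ℝ :=
  ∑ x, mixW p θ x * g x

/-- Central conditional moments `E_θ^c[g₁⋯g_r] = Σ_x w(θ,x) ∏ᵢ (gᵢ(x) − E_θ[gᵢ])`. -/
def mixEc {𝒳 : Type*} [Fintype 𝒳] (p : ℝ → 𝒳 → ℝ) (θ : ℝ) (gs : List (𝒳 → ℝ)) : ℝ :=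
  ∑ x, mixW p θ x * (gs.map fun g => g x - mixE p θ g).prod

/-- `ℓ_j(θ,x) = (∂/∂θ)^j log p(θ,x)`. -/
def mixL {𝒳 : Type*} [Fintype 𝒳] (p : ℝ → 𝒳 → ℝ) (j : ℕ) (θ : ℝ) (x : 𝒳) : ℝ :=
  iteratedDeriv j (fun θ' => Real.log (p θ' x)) θ

end

section auxcalc

open Real Filter

private lemma mip_log1 {U : Set ℝ} (hU : IsOpen U) {f : ℝ → ℝ}
    (hpos : ∀ t ∈ U, 0 < f t) (h0 : DifferentiableOn ℝ f U) :
    ∀ t ∈ U, deriv (fun s => Real.log (f s)) t = deriv f t / f t := by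
  intro t ht
  exact ((h0.differentiableAt (hU.mem_nhds ht)).hasDerivAt.log
    (ne_of_gt (hpos t ht))).deriv

private lemma mip_log2 {U : Set ℝ} (hU : IsOpen U) {f : ℝ → ℝ}
    (hpos : ∀ t ∈ U, 0 < f t) (h0 : DifferentiableOn ℝ f U)
    (h1 : DifferentiableOn ℝ (deriv f) U) :
    ∀ t ∈ U, deriv (deriv (fun s => Real.log (f s))) t
      = deriv (deriv f) t / f t - (deriv f t / f t) ^ 2 := by
  intro t ht
  have hev : deriv (fun s => Real.log (f s)) =ᶠ[nhds t] fun s => deriv f s / f s :=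
    Filter.eventuallyEq_of_mem (hU.mem_nhds ht) (mip_log1 hU hpos h0)
  rw [hev.deriv_eq]
  have hfd : HasDerivAt f (deriv f t) t :=
    (h0.differentiableAt (hU.mem_nhds ht)).hasDerivAt
  have h1d : HasDerivAt (deriv f) (deriv (deriv f) t) t :=
    (h1.differentiableAt (hU.mem_nhds ht)).hasDerivAt
  have hne : f t ≠ 0 := ne_of_gt (hpos t ht)
  rw [(h1d.fun_div hfd hne).deriv]
  field_simp

private lemma mip_log3 {U : Set ℝ} (hU : IsOpen U) {f : ℝ → ℝ}
    (hpos : ∀ t ∈ U, 0 < f t) (h0 : DifferentiableOn ℝ f U)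
    (h1 : DifferentiableOn ℝ (deriv f) U)
    (h2 : DifferentiableOn ℝ (deriv (deriv f)) U) :
    ∀ t ∈ U, iteratedDeriv 3 (fun s => Real.log (f s)) t
      = deriv (deriv (deriv f)) t / f t
        - 3 * (deriv (deriv f) t * deriv f t) / (f t) ^ 2
        + 2 * (deriv f t) ^ 3 / (f t) ^ 3 := by
  intro t ht
  have h3 : iteratedDeriv 3 (fun s => Real.log (f s))
      = deriv (deriv (deriv (fun s => Real.log (f s)))) := by
    rw [iteratedDeriv_succ, iteratedDeriv_succ, iteratedDeriv_one]
  rw [h3]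
  have hev : deriv (deriv (fun s => Real.log (f s)))
      =ᶠ[nhds t] fun s => deriv (deriv f) s / f s - (deriv f s / f s) ^ 2 :=
    Filter.eventuallyEq_of_mem (hU.mem_nhds ht) (mip_log2 hU hpos h0 h1)
  rw [hev.deriv_eq]
  have hfd : HasDerivAt f (deriv f t) t :=
    (h0.differentiableAt (hU.mem_nhds ht)).hasDerivAt
  have h1d : HasDerivAt (deriv f) (deriv (deriv f) t) t :=
    (h1.differentiableAt (hU.mem_nhds ht)).hasDerivAt
  have h2d : HasDerivAt (deriv (deriv f)) (deriv (deriv (deriv f)) t) t :=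
    (h2.differentiableAt (hU.mem_nhds ht)).hasDerivAt
  have hne : f t ≠ 0 := ne_of_gt (hpos t ht)
  have hq : HasDerivAt (fun s => deriv (deriv f) s / f s - (deriv f s / f s) ^ 2)
      ((deriv (deriv (deriv f)) t * f t - deriv (deriv f) t * deriv f t) / f t ^ 2
        - 2 * (deriv f t / f t) ^ 1 *
          ((deriv (deriv f) t * f t - deriv f t * deriv f t) / f t ^ 2)) t :=
    (h2d.div hfd hne).sub (((h1d.div hfd hne).pow 2))
  rw [hq.deriv]
  field_simp
  ring

private lemma mip_Ec_two {𝒳 : Type*} [Fintype 𝒳] (p : ℝ → 𝒳 → ℝ) (θ : ℝ) (g h : 𝒳 → ℝ)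
    (hw : ∑ x, mixW p θ x = 1) :
    mixEc p θ [g, h] = mixE p θ (fun x => g x * h x) - mixE p θ g * mixE p θ h := by
  have e1 : ∑ x, mixW p θ x * h x = mixE p θ h := rfl
  have e2 : ∑ x, mixW p θ x * g x = mixE p θ g := rfl
  have expand : ∀ x : 𝒳, mixW p θ x * ((g x - mixE p θ g) * ((h x - mixE p θ h) * 1))
      = mixW p θ x * (g x * h x) - mixE p θ g * (mixW p θ x * h x)
        - mixE p θ h * (mixW p θ x * g x)
        + (mixE p θ g * mixE p θ h) * mixW p θ x := fun x => by ring
  calc mixEc p θ [g, h]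
      = ∑ x, (mixW p θ x * (g x * h x) - mixE p θ g * (mixW p θ x * h x)
          - mixE p θ h * (mixW p θ x * g x)
          + (mixE p θ g * mixE p θ h) * mixW p θ x) := by
        unfold mixEc
        simp only [List.map_cons, List.map_nil, List.prod_cons, List.prod_nil]
        exact Finset.sum_congr rfl fun x _ => expand x
    _ = mixE p θ (fun x => g x * h x) - mixE p θ g * mixE p θ h := by
        rw [Finset.sum_add_distrib, Finset.sum_sub_distrib, Finset.sum_sub_distrib,
          ← Finset.mul_sum, ← Finset.mul_sum, ← Finset.mul_sum, e1, e2, hw]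
        show mixE p θ _ - _ - _ + _ = _
        ring

private lemma mip_Ec_three {𝒳 : Type*} [Fintype 𝒳] (p : ℝ → 𝒳 → ℝ) (θ : ℝ) (g : 𝒳 → ℝ)
    (hw : ∑ x, mixW p θ x = 1) :
    mixEc p θ [g, g, g] = mixE p θ (fun x => g x ^ 3)
      - 3 * mixE p θ (fun x => g x ^ 2) * mixE p θ g + 2 * (mixE p θ g) ^ 3 := by
  have e1 : ∑ x, mixW p θ x * g x = mixE p θ g := rfl
  have e2 : ∑ x, mixW p θ x * g x ^ 2 = mixE p θ (fun x => g x ^ 2) := rfl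
  have expand : ∀ x : 𝒳,
      mixW p θ x * ((g x - mixE p θ g) * ((g x - mixE p θ g) * ((g x - mixE p θ g) * 1)))
      = mixW p θ x * g x ^ 3 - 3 * mixE p θ g * (mixW p θ x * g x ^ 2)
        + 3 * (mixE p θ g) ^ 2 * (mixW p θ x * g x)
        - (mixE p θ g) ^ 3 * mixW p θ x := fun x => by ring
  calc mixEc p θ [g, g, g]
      = ∑ x, (mixW p θ x * g x ^ 3 - 3 * mixE p θ g * (mixW p θ x * g x ^ 2)
          + 3 * (mixE p θ g) ^ 2 * (mixW p θ x * g x)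
          - (mixE p θ g) ^ 3 * mixW p θ x) := by
        unfold mixEc
        simp only [List.map_cons, List.map_nil, List.prod_cons, List.prod_nil]
        exact Finset.sum_congr rfl fun x _ => expand x
    _ = _ := by
        rw [Finset.sum_sub_distrib, Finset.sum_add_distrib, Finset.sum_sub_distrib,
          ← Finset.mul_sum, ← Finset.mul_sum, ← Finset.mul_sum, e1, e2, hw]
        show mixE p θ _ - _ + _ - _ = _
        ring

private lemma mip_alg3 (a P d1 : ℝ) (ha : a ≠ 0) (hP : P ≠ 0) :
    a / P * (d1 / a) = d1 / P := by
  field_simp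

private lemma mip_alg2 (a P d1 d2 : ℝ) (ha : a ≠ 0) (hP : P ≠ 0) :
    a / P * (d2 / a - (d1 / a) ^ 2) + a / P * (d1 / a) ^ 2 = d2 / P := by
  field_simp; ring

private lemma mip_alg1 (a P d1 d2 d3 : ℝ) (ha : a ≠ 0) (hP : P ≠ 0) :
    a / P * (d3 / a - 3 * (d2 * d1) / a ^ 2 + 2 * d1 ^ 3 / a ^ 3)
      + 3 * (a / P * ((d2 / a - (d1 / a) ^ 2) * (d1 / a)))
      + a / P * (d1 / a) ^ 3 = d3 / P := by
  field_simp; ring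

end auxcalc

/-- Missing information principle, third order (finite mixture form): if `p` is three times
differentiable in `θ`, then for every `θ ∈ U`,
`(d³/dθ³) log P(θ) = E_θ[ℓ₃] + 3 E_θ^c[ℓ₂ℓ₁] + E_θ^c[ℓ₁³]`. -/
theorem stmt3 {𝒳 : Type*} [Fintype 𝒳] [Nonempty 𝒳]
    (U : Set ℝ) (hU : IsOpen U) (p : ℝ → 𝒳 → ℝ)
    (hpos : ∀ θ ∈ U, ∀ x, 0 < p θ x)
    (hdiff : ∀ x, ∀ j < 3, DifferentiableOn ℝ (iteratedDeriv j (fun θ => p θ x)) U) :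
    ∀ θ ∈ U,
      iteratedDeriv 3 (fun θ' => Real.log (mixP p θ')) θ
        = mixE p θ (mixL p 3 θ)
          + 3 * mixEc p θ [mixL p 2 θ, mixL p 1 θ]
          + mixEc p θ [mixL p 1 θ, mixL p 1 θ, mixL p 1 θ] := by
  intro θ hθ
  -- differentiability of each p(·,x)
  have h0 : ∀ x : 𝒳, DifferentiableOn ℝ (fun θ' => p θ' x) U := by
    intro x
    have := hdiff x 0 (by norm_num)
    rwa [iteratedDeriv_zero] at this
  have h1 : ∀ x : 𝒳, DifferentiableOn ℝ (deriv (fun θ' => p θ' x)) U := by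
    intro x
    have := hdiff x 1 (by norm_num)
    rwa [iteratedDeriv_one] at this
  have h2 : ∀ x : 𝒳, DifferentiableOn ℝ (deriv (deriv (fun θ' => p θ' x))) U := by
    intro x
    have := hdiff x 2 (by norm_num)
    rwa [show (2 : ℕ) = 1 + 1 from rfl, iteratedDeriv_succ, iteratedDeriv_one] at this
  -- positivity facts
  have hPpos : ∀ t ∈ U, 0 < mixP p t := by
    intro t ht
    exact Finset.sum_pos (fun x _ => hpos t ht x) Finset.univ_nonempty
  have hPne : mixP p θ ≠ 0 := ne_of_gt (hPpos θ hθ)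
  have hpne : ∀ x : 𝒳, p θ x ≠ 0 := fun x => ne_of_gt (hpos θ hθ x)
  -- derivatives of P
  have hPfun : mixP p = fun t => ∑ x, p t x := rfl
  have hP0 : DifferentiableOn ℝ (mixP p) U := by
    rw [hPfun]; exact DifferentiableOn.fun_sum fun x _ => h0 x
  have hD1 : ∀ t ∈ U, deriv (mixP p) t = ∑ x, deriv (fun θ' => p θ' x) t := by
    intro t ht
    rw [hPfun]
    exact deriv_fun_sum fun x _ => (h0 x).differentiableAt (hU.mem_nhds ht)
  have hP1 : DifferentiableOn ℝ (deriv (mixP p)) U :=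
    DifferentiableOn.congr (DifferentiableOn.fun_sum fun x _ => h1 x) hD1
  have hD2 : ∀ t ∈ U, deriv (deriv (mixP p)) t
      = ∑ x, deriv (deriv (fun θ' => p θ' x)) t := by
    intro t ht
    have hev : deriv (mixP p) =ᶠ[nhds t] fun s => ∑ x, deriv (fun θ' => p θ' x) s :=
      Filter.eventuallyEq_of_mem (hU.mem_nhds ht) hD1
    rw [hev.deriv_eq]
    exact deriv_fun_sum fun x _ => (h1 x).differentiableAt (hU.mem_nhds ht)
  have hP2 : DifferentiableOn ℝ (deriv (deriv (mixP p))) U :=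
    DifferentiableOn.congr (DifferentiableOn.fun_sum fun x _ => h2 x) hD2
  have hD3 : deriv (deriv (deriv (mixP p))) θ
      = ∑ x, deriv (deriv (deriv (fun θ' => p θ' x))) θ := by
    have hev : deriv (deriv (mixP p))
        =ᶠ[nhds θ] fun s => ∑ x, deriv (deriv (fun θ' => p θ' x)) s :=
      Filter.eventuallyEq_of_mem (hU.mem_nhds hθ) hD2
    rw [hev.deriv_eq]
    exact deriv_fun_sum fun x _ => (h2 x).differentiableAt (hU.mem_nhds hθ)
  -- LHS evaluated
  have hLHS : iteratedDeriv 3 (fun θ' => Real.log (mixP p θ')) θ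
      = (∑ x, deriv (deriv (deriv (fun θ' => p θ' x))) θ) / mixP p θ
        - 3 * ((∑ x, deriv (deriv (fun θ' => p θ' x)) θ)
            * (∑ x, deriv (fun θ' => p θ' x) θ)) / (mixP p θ) ^ 2
        + 2 * (∑ x, deriv (fun θ' => p θ' x) θ) ^ 3 / (mixP p θ) ^ 3 := by
    rw [mip_log3 hU hPpos hP0 hP1 hP2 θ hθ, hD1 θ hθ, hD2 θ hθ, hD3]
  -- pointwise formulas for the ℓ_j
  have hL1 : mixL p 1 θ = fun x => deriv (fun θ' => p θ' x) θ / p θ x := by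
    funext x
    unfold mixL
    rw [iteratedDeriv_one]
    exact mip_log1 hU (fun t ht => hpos t ht x) (h0 x) θ hθ
  have hL2 : mixL p 2 θ = fun x => deriv (deriv (fun θ' => p θ' x)) θ / p θ x
      - (deriv (fun θ' => p θ' x) θ / p θ x) ^ 2 := by
    funext x
    unfold mixL
    rw [show (2 : ℕ) = 1 + 1 from rfl, iteratedDeriv_succ, iteratedDeriv_one]
    exact mip_log2 hU (fun t ht => hpos t ht x) (h0 x) (h1 x) θ hθ
  have hL3 : mixL p 3 θ = fun x => deriv (deriv (deriv (fun θ' => p θ' x))) θ / p θ x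
      - 3 * (deriv (deriv (fun θ' => p θ' x)) θ * deriv (fun θ' => p θ' x) θ) / (p θ x) ^ 2
      + 2 * (deriv (fun θ' => p θ' x) θ) ^ 3 / (p θ x) ^ 3 := by
    funext x
    exact mip_log3 hU (fun t ht => hpos t ht x) (h0 x) (h1 x) (h2 x) θ hθ
  -- weights sum to one
  have hw : ∑ x, mixW p θ x = 1 := by
    simp only [mixW]
    rw [← Finset.sum_div, show (∑ x, p θ x) = mixP p θ from rfl]
    exact div_self hPne
  -- key raw moment identities
  have F3 : mixE p θ (mixL p 1 θ) = (∑ x, deriv (fun θ' => p θ' x) θ) / mixP p θ := by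
    simp only [mixE, mixW, hL1]
    rw [Finset.sum_div]
    refine Finset.sum_congr rfl fun x _ => ?_
    exact mip_alg3 _ _ _ (hpne x) hPne
  have F2 : mixE p θ (mixL p 2 θ) + mixE p θ (fun x => mixL p 1 θ x ^ 2)
      = (∑ x, deriv (deriv (fun θ' => p θ' x)) θ) / mixP p θ := by
    simp only [mixE, mixW, hL1, hL2]
    rw [← Finset.sum_add_distrib, Finset.sum_div]
    refine Finset.sum_congr rfl fun x _ => ?_
    exact mip_alg2 _ _ _ _ (hpne x) hPne
  have F1 : mixE p θ (mixL p 3 θ)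
        + 3 * mixE p θ (fun x => mixL p 2 θ x * mixL p 1 θ x)
        + mixE p θ (fun x => mixL p 1 θ x ^ 3)
      = (∑ x, deriv (deriv (deriv (fun θ' => p θ' x))) θ) / mixP p θ := by
    simp only [mixE, mixW, hL1, hL2, hL3]
    rw [Finset.mul_sum, ← Finset.sum_add_distrib, ← Finset.sum_add_distrib, Finset.sum_div]
    refine Finset.sum_congr rfl fun x _ => ?_
    exact mip_alg1 _ _ _ _ _ (hpne x) hPne
  -- put everything together
  rw [hLHS, mip_Ec_two p θ _ _ hw, mip_Ec_three p θ _ hw]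
  linear_combination (-1 : ℝ) * F1 + 3 * mixE p θ (mixL p 1 θ) * F2
    + (3 * ((∑ x, deriv (deriv (fun θ' => p θ' x)) θ) / mixP p θ)
        - 2 * ((mixE p θ (mixL p 1 θ)) ^ 2
          + mixE p θ (mixL p 1 θ) * ((∑ x, deriv (fun θ' => p θ' x) θ) / mixP p θ)
          + ((∑ x, deriv (fun θ' => p θ' x) θ) / mixP p θ) ^ 2)) * F3
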